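/- arXiv:math/0607633 — 3 statements merged into one kernel-verified Lean document; each statement's English description precedes it below -/
import Mathlib

section
/- Fix λ > 0 and v > 0. For Δ > 0 and u > 0 write z(Δ, u) = (λ/v)·√u and r(Δ, u) = [ √u · v · (1 + Δλ) · I_0(z(Δ,u)) + u·λ·I_1(z(Δ,u)) ] / [ v·λ·( √u·I_0(z(Δ,u)) + v·Δ·I_1(z(Δ,u)) ) ]. Then r(Δ, u) → 1/λ as (Δ, u) → (0, 0) along Δ > 0, u > 0. -/
open Filter

/-- The modified Bessel function of the first kind of integer order `ν`,
defined by its power series. -/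
noncomputable def besselI (ν : ℕ) (x : ℝ) : ℝ :=
  ∑' k : ℕ, (x / 2) ^ (2 * k + ν) / ((Nat.factorial k : ℝ) * Nat.factorial (k + ν))

lemma besselI_summable (ν : ℕ) (x : ℝ) :
    Summable (fun k : ℕ => (x / 2) ^ (2 * k + ν) / ((Nat.factorial k : ℝ) * Nat.factorial (k + ν))) := by
  apply Summable.of_norm_bounded (g := fun k : ℕ => |x/2|^ν * (((x/2)^2)^k / Nat.factorial k))
  · exact (Real.summable_pow_div_factorial ((x/2)^2)).mul_left _
  · intro k
    have h1 : (1:ℝ) ≤ Nat.factorial (k+ν) := by exact_mod_cast Nat.one_le_iff_ne_zero.2 (Nat.factorial_ne_zero _)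
    have h0 : (0:ℝ) < Nat.factorial k := by exact_mod_cast Nat.factorial_pos k
    rw [norm_div, Real.norm_eq_abs, Real.norm_eq_abs]
    rw [abs_of_pos (by positivity : (0:ℝ) < (Nat.factorial k : ℝ) * Nat.factorial (k+ν))]
    have : |x/2| ^ (2*k+ν) = |x/2|^ν * ((x/2)^2)^k := by
      rw [← abs_pow, ← sq_abs, ← pow_mul, ← pow_add, abs_pow]
      ring_nf
    rw [abs_pow, this]
    rw [mul_div_assoc]
    apply mul_le_mul_of_nonneg_left _ (by positivity)
    gcongr
    exact le_mul_of_one_le_right h0.le h1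

lemma term_nonneg (ν : ℕ) (x : ℝ) (hx : 0 ≤ x) (k : ℕ) :
    0 ≤ (x / 2) ^ (2 * k + ν) / ((Nat.factorial k : ℝ) * Nat.factorial (k + ν)) := by
  have h0 : (0:ℝ) < Nat.factorial k := by exact_mod_cast Nat.factorial_pos k
  have h0' : (0:ℝ) < Nat.factorial (k+ν) := by exact_mod_cast Nat.factorial_pos (k+ν)
  positivity

lemma term_le (ν : ℕ) (x : ℝ) (hx : 0 ≤ x) (k : ℕ) :
    (x / 2) ^ (2 * k + ν) / ((Nat.factorial k : ℝ) * Nat.factorial (k + ν))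
      ≤ (x/2)^ν * ((x/2)^2)^k := by
  have h1 : (1:ℝ) ≤ (Nat.factorial k : ℝ) * Nat.factorial (k+ν) := by
    have := Nat.factorial_pos k
    have := Nat.factorial_pos (k+ν)
    exact_mod_cast Nat.one_le_iff_ne_zero.2 (Nat.mul_ne_zero (Nat.factorial_ne_zero k) (Nat.factorial_ne_zero _))
  have h2 : (x/2)^(2*k+ν) = (x/2)^ν * ((x/2)^2)^k := by
    rw [← pow_mul, ← pow_add]; ring_nf
  rw [h2]
  exact div_le_self (by positivity) h1

lemma besselI_zero_ge (x : ℝ) (hx : 0 ≤ x) : 1 ≤ besselI 0 x := by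
  have := Summable.le_tsum (besselI_summable 0 x) 0 (fun k _ => term_nonneg 0 x hx k)
  simpa [besselI] using this

lemma besselI_zero_le (x : ℝ) (hx : 0 ≤ x) (hx2 : x < 2) :
    besselI 0 x ≤ (1 - (x/2)^2)⁻¹ := by
  have hr : (x/2)^2 < 1 := by nlinarith
  have hg : Summable (fun k : ℕ => ((x/2)^2)^k) := summable_geometric_of_lt_one (by positivity) hr
  have := Summable.tsum_le_tsum (fun k => by simpa using term_le 0 x hx k) (besselI_summable 0 x) hg
  rw [tsum_geometric_of_lt_one (by positivity) hr] at this
  simpa [besselI] using this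

lemma besselI_one_ge (x : ℝ) (hx : 0 ≤ x) : x/2 ≤ besselI 1 x := by
  have := Summable.le_tsum (besselI_summable 1 x) 0 (fun k _ => term_nonneg 1 x hx k)
  simpa [besselI] using this

lemma besselI_one_le (x : ℝ) (hx : 0 ≤ x) (hx2 : x < 2) :
    besselI 1 x ≤ (x/2) * (1 - (x/2)^2)⁻¹ := by
  have hr : (x/2)^2 < 1 := by nlinarith
  have hg : Summable (fun k : ℕ => ((x/2)^2)^k) := summable_geometric_of_lt_one (by positivity) hr
  have := Summable.tsum_le_tsum (fun k => term_le 1 x hx k) (besselI_summable 1 x) (hg.mul_left ((x/2)^1))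
  rw [tsum_mul_left, tsum_geometric_of_lt_one (by positivity) hr] at this
  simpa [besselI] using this

lemma inv_aux_tendsto : Tendsto (fun x : ℝ => (1 - (x/2)^2)⁻¹) (nhdsWithin 0 (Set.Ioi 0)) (nhds 1) := by
  have h : ContinuousAt (fun x : ℝ => (1 - (x/2)^2)⁻¹) 0 := by
    apply ContinuousAt.inv₀ (by fun_prop) (by norm_num)
  have := h.tendsto.mono_left (nhdsWithin_le_nhds (s := Set.Ioi 0))
  simpa using this

lemma ev_lt_two : ∀ᶠ x in nhdsWithin (0:ℝ) (Set.Ioi 0), x < 2 :=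
  (eventually_lt_nhds (by norm_num : (0:ℝ) < 2)).filter_mono nhdsWithin_le_nhds

lemma besselI_zero_tendsto : Tendsto (besselI 0) (nhdsWithin 0 (Set.Ioi 0)) (nhds 1) := by
  apply tendsto_of_tendsto_of_tendsto_of_le_of_le' tendsto_const_nhds inv_aux_tendsto
  · filter_upwards [self_mem_nhdsWithin] with x hx
    exact besselI_zero_ge x (le_of_lt hx)
  · filter_upwards [self_mem_nhdsWithin, ev_lt_two] with x hx hx2
    exact besselI_zero_le x (le_of_lt hx) hx2

lemma besselI_one_div_tendsto :
    Tendsto (fun x => besselI 1 x / x) (nhdsWithin 0 (Set.Ioi 0)) (nhds (1/2)) := by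
  have h2 : Tendsto (fun x : ℝ => (1/2) * (1 - (x/2)^2)⁻¹) (nhdsWithin 0 (Set.Ioi 0)) (nhds (1/2)) := by
    have := inv_aux_tendsto.const_mul (1/2 : ℝ)
    simpa using this
  apply tendsto_of_tendsto_of_tendsto_of_le_of_le' tendsto_const_nhds h2
  · filter_upwards [self_mem_nhdsWithin] with x hx
    have := besselI_one_ge x (le_of_lt hx)
    rw [le_div_iff₀ hx]
    linarith
  · filter_upwards [self_mem_nhdsWithin, ev_lt_two] with x hx hx2
    have := besselI_one_le x (le_of_lt hx) hx2
    rw [div_le_iff₀ hx]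
    calc besselI 1 x ≤ (x/2) * (1 - (x/2)^2)⁻¹ := this
    _ = 1/2 * (1 - (x/2)^2)⁻¹ * x := by ring

/-- The λ-derivative of a single log-likelihood summand tends to `1/λ`
as `(Δ, u) → (0, 0)` along `Δ > 0`, `u > 0`. -/
theorem logLik_deriv_summand_tendsto (lam v : ℝ) (hlam : 0 < lam) (hv : 0 < v) :
    Tendsto
      (fun p : ℝ × ℝ =>
        (Real.sqrt p.2 * v * (1 + p.1 * lam) *
            besselI 0 ((lam / v) * Real.sqrt p.2)
          + p.2 * lam * besselI 1 ((lam / v) * Real.sqrt p.2)) /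
        (v * lam * (Real.sqrt p.2 * besselI 0 ((lam / v) * Real.sqrt p.2)
          + v * p.1 * besselI 1 ((lam / v) * Real.sqrt p.2))))
      ((nhdsWithin 0 (Set.Ioi 0)) ×ˢ (nhdsWithin 0 (Set.Ioi 0)))
      (nhds (1 / lam)) := by
  have hv' : v ≠ 0 := hv.ne'
  have hlam' : lam ≠ 0 := hlam.ne'
  set F := (nhdsWithin (0:ℝ) (Set.Ioi 0)) ×ˢ (nhdsWithin (0:ℝ) (Set.Ioi 0)) with hF
  -- the argument of the Bessel functions tends to 0 from the right
  have hsq : Tendsto Real.sqrt (nhdsWithin (0:ℝ) (Set.Ioi 0)) (nhdsWithin (0:ℝ) (Set.Ioi 0)) := by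
    apply tendsto_nhdsWithin_of_tendsto_nhds_of_eventually_within
    · have := (Real.continuous_sqrt.tendsto 0).mono_left (nhdsWithin_le_nhds (s := Set.Ioi 0))
      simpa using this
    · filter_upwards [self_mem_nhdsWithin] with x hx
      exact Real.sqrt_pos.2 hx
  have hmul : Tendsto (fun x : ℝ => (lam/v) * x) (nhdsWithin (0:ℝ) (Set.Ioi 0))
      (nhdsWithin (0:ℝ) (Set.Ioi 0)) := by
    apply tendsto_nhdsWithin_of_tendsto_nhds_of_eventually_within
    · have : Tendsto (fun x : ℝ => (lam/v) * x) (nhds 0) (nhds ((lam/v) * 0)) :=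
        (continuous_const.mul continuous_id).tendsto 0
      simpa using this.mono_left (nhdsWithin_le_nhds (s := Set.Ioi 0))
    · filter_upwards [self_mem_nhdsWithin] with x hx
      exact mul_pos (div_pos hlam hv) hx
  have hsnd : Tendsto (fun p : ℝ × ℝ => p.2) F (nhdsWithin (0:ℝ) (Set.Ioi 0)) := tendsto_snd
  have hz : Tendsto (fun p : ℝ × ℝ => (lam/v) * Real.sqrt p.2) F (nhdsWithin (0:ℝ) (Set.Ioi 0)) :=
    hmul.comp (hsq.comp hsnd)
  have hA : Tendsto (fun p : ℝ × ℝ => besselI 0 ((lam/v) * Real.sqrt p.2)) F (nhds 1) :=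
    besselI_zero_tendsto.comp hz
  have hC : Tendsto (fun p : ℝ × ℝ =>
      besselI 1 ((lam/v) * Real.sqrt p.2) / ((lam/v) * Real.sqrt p.2)) F (nhds (1/2)) :=
    besselI_one_div_tendsto.comp hz
  have hfst : Tendsto (fun p : ℝ × ℝ => p.1) F (nhds 0) :=
    tendsto_fst.mono_right nhdsWithin_le_nhds
  have hu : Tendsto (fun p : ℝ × ℝ => p.2) F (nhds 0) :=
    hsnd.mono_right nhdsWithin_le_nhds
  -- the simplified quotient
  set A : ℝ × ℝ → ℝ := fun p => besselI 0 ((lam/v) * Real.sqrt p.2) with hAdef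
  set C : ℝ × ℝ → ℝ := fun p => besselI 1 ((lam/v) * Real.sqrt p.2) / ((lam/v) * Real.sqrt p.2)
    with hCdef
  have hnum : Tendsto (fun p : ℝ × ℝ => v*(1+p.1*lam)*A p + p.2*lam*((lam/v)*C p)) F
      (nhds (v*(1+0*lam)*1 + 0*lam*((lam/v)*(1/2)))) :=
    ((tendsto_const_nhds.mul (tendsto_const_nhds.add (hfst.mul tendsto_const_nhds))).mul hA).add
      ((hu.mul tendsto_const_nhds).mul (tendsto_const_nhds.mul hC))
  have hden : Tendsto (fun p : ℝ × ℝ => v*lam*(A p + lam*p.1*C p)) F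
      (nhds (v*lam*(1 + lam*0*(1/2)))) :=
    tendsto_const_nhds.mul (hA.add ((tendsto_const_nhds.mul hfst).mul hC))
  have hne : v*lam*(1 + lam*0*(1/2)) ≠ 0 := by
    norm_num
    constructor <;> assumption
  have hG : Tendsto (fun p : ℝ × ℝ =>
      (v*(1+p.1*lam)*A p + p.2*lam*((lam/v)*C p)) / (v*lam*(A p + lam*p.1*C p))) F
      (nhds (1/lam)) := by
    have := hnum.div hden hne
    convert this using 2
    · rfl
    · rw [div_eq_div_iff hlam' hne]; ring
  -- eventual equality with the original function
  apply hG.congr'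
  have hmem : Set.Ioi (0:ℝ) ×ˢ Set.Ioi (0:ℝ) ∈ F :=
    Filter.prod_mem_prod self_mem_nhdsWithin self_mem_nhdsWithin
  filter_upwards [hmem] with p hp
  obtain ⟨hp1, hp2⟩ := hp
  have hp1 : (0:ℝ) < p.1 := hp1
  have hp2 : (0:ℝ) < p.2 := hp2
  set s := Real.sqrt p.2 with hsdef
  have hs : 0 < s := Real.sqrt_pos.2 hp2
  have hss : s * s = p.2 := Real.mul_self_sqrt hp2.le
  have hz0 : (lam/v) * s ≠ 0 := by positivity
  have hI1 : besselI 1 ((lam/v) * s) = C p * ((lam/v) * s) := by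
    rw [hCdef]
    exact (div_mul_cancel₀ _ hz0).symm
  have hN : s * v * (1 + p.1 * lam) * A p + p.2 * lam * besselI 1 ((lam/v)*s)
      = s * (v*(1+p.1*lam)*A p + p.2*lam*((lam/v)*C p)) := by
    rw [hI1, ← hss]; ring
  have hD : v * lam * (s * A p + v * p.1 * besselI 1 ((lam/v)*s))
      = s * (v*lam*(A p + lam*p.1*C p)) := by
    rw [hI1]
    field_simp
  show (v*(1+p.1*lam)*A p + p.2*lam*((lam/v)*C p)) / (v*lam*(A p + lam*p.1*C p))
    = (s * v * (1 + p.1 * lam) * A p + p.2 * lam * besselI 1 ((lam/v)*s)) /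
      (v * lam * (s * A p + v * p.1 * besselI 1 ((lam/v)*s)))
  rw [hN, hD, mul_div_mul_left _ _ hs.ne']
end

section
/- (Deterministic core of Theorem 2.) Fix λ > 0, v > 0, T > 0 and a natural number N. For each n ≥ 1 let Δ_n = T/n and let u_{n,1}, …, u_{n,N} be real numbers with 0 < u_{n,i} ≤ v²·Δ_n² for each i. Define the approximated score F_n(λ) = −n·Δ_n + ∑_{i=1}^{N} [ I_0(z_{n,i})·(1 + λΔ_n/2) + ( λ√u_{n,i}/v + vΔ_n/√u_{n,i} )·I_1(z_{n,i}) + (λΔ_n/2)·I_2(z_{n,i}) ] / [ λ·I_0(z_{n,i}) + (λ·v·Δ_n/√u_{n,i})·I_1(z_{n,i}) ], where z_{n,i} = (λ/v)·√u_{n,i}. Then F_n(λ) → −T + N/λ as n → ∞. -/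
open Filter

lemma bessel_term_nonneg (ν : ℕ) {x : ℝ} (hx : 0 ≤ x) (k : ℕ) :
    0 ≤ (x / 2) ^ (2 * k + ν) / ((Nat.factorial k : ℝ) * Nat.factorial (k + ν)) := by
  positivity

lemma bessel_term_le (ν : ℕ) {x : ℝ} (hx : 0 ≤ x) (k : ℕ) :
    (x / 2) ^ (2 * k + ν) / ((Nat.factorial k : ℝ) * Nat.factorial (k + ν))
      ≤ (x / 2) ^ ν * ((x ^ 2 / 4) ^ k / Nat.factorial k) := by
  have h1 : (1 : ℝ) ≤ (Nat.factorial (k + ν) : ℝ) := by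
    exact_mod_cast Nat.one_le_iff_ne_zero.mpr (Nat.factorial_ne_zero _)
  have hk : (0 : ℝ) < (Nat.factorial k : ℝ) := by positivity
  have hpow : (x / 2) ^ (2 * k + ν) = (x / 2) ^ ν * (x ^ 2 / 4) ^ k := by
    rw [pow_add, pow_mul, mul_comm]
    congr 1
    ring
  rw [hpow, mul_div_assoc]
  apply mul_le_mul_of_nonneg_left _ (by positivity)
  apply div_le_div_of_nonneg_left (by positivity) hk
  nlinarith

lemma summable_bound (ν : ℕ) (x : ℝ) :
    Summable (fun k : ℕ => (x / 2) ^ ν * ((x ^ 2 / 4) ^ k / Nat.factorial k)) :=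
  (Real.summable_pow_div_factorial (x ^ 2 / 4)).mul_left _

lemma summable_bessel (ν : ℕ) {x : ℝ} (hx : 0 ≤ x) :
    Summable (fun k : ℕ =>
      (x / 2) ^ (2 * k + ν) / ((Nat.factorial k : ℝ) * Nat.factorial (k + ν))) :=
  Summable.of_nonneg_of_le (bessel_term_nonneg ν hx) (bessel_term_le ν hx) (summable_bound ν x)

lemma besselI_nonneg (ν : ℕ) {x : ℝ} (hx : 0 ≤ x) : 0 ≤ besselI ν x :=
  tsum_nonneg (bessel_term_nonneg ν hx)

lemma tsum_exp (y : ℝ) : (∑' k : ℕ, y ^ k / Nat.factorial k) = Real.exp y := by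
  rw [Real.exp_eq_exp_ℝ, NormedSpace.exp_eq_tsum_div]

lemma besselI_le (ν : ℕ) {x : ℝ} (hx : 0 ≤ x) :
    besselI ν x ≤ (x / 2) ^ ν * Real.exp (x ^ 2 / 4) := by
  have := Summable.tsum_le_tsum (bessel_term_le ν hx) (summable_bessel ν hx) (summable_bound ν x)
  calc besselI ν x ≤ ∑' k : ℕ, (x / 2) ^ ν * ((x ^ 2 / 4) ^ k / Nat.factorial k) := this
    _ = (x / 2) ^ ν * ∑' k : ℕ, (x ^ 2 / 4) ^ k / Nat.factorial k := by
        rw [tsum_mul_left]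
    _ = _ := by rw [tsum_exp]

lemma one_le_besselI_zero {x : ℝ} (hx : 0 ≤ x) : 1 ≤ besselI 0 x := by
  have h := Summable.le_tsum (summable_bessel 0 hx) 0 (fun k _ => bessel_term_nonneg 0 hx k)
  simpa [besselI] using h

lemma ratio_tendsto (lam v T : ℝ) (hlam : 0 < lam) (hv : 0 < v) (hT : 0 < T)
    (s : ℕ → ℝ) (hs : ∀ n : ℕ, 1 ≤ n → 0 < s n ∧ s n ≤ v * (T / n)) :
    Tendsto (fun n : ℕ =>
      (besselI 0 ((lam / v) * s n) * (1 + lam * (T / n) / 2)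
        + (lam * s n / v + v * (T / n) / s n) * besselI 1 ((lam / v) * s n)
        + (lam * (T / n) / 2) * besselI 2 ((lam / v) * s n)) /
      (lam * besselI 0 ((lam / v) * s n)
        + (lam * v * (T / n) / s n) * besselI 1 ((lam / v) * s n)))
      atTop (nhds (1 / lam)) := by
  set z : ℕ → ℝ := fun n => (lam / v) * s n with hz
  have hΔ : Tendsto (fun n : ℕ => T / n) atTop (nhds 0) :=
    tendsto_const_div_atTop_nhds_zero_nat T
  have hzpos : ∀ n : ℕ, 1 ≤ n → 0 < z n := fun n hn => by
    have := (hs n hn).1; positivity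
  have hzle : ∀ n : ℕ, 1 ≤ n → z n ≤ lam * (T / n) := fun n hn => by
    have h1 := (hs n hn).2
    have : (lam / v) * s n ≤ (lam / v) * (v * (T / n)) := by
      apply mul_le_mul_of_nonneg_left h1 (by positivity)
    calc z n ≤ (lam / v) * (v * (T / n)) := this
      _ = lam * (T / n) := by field_simp
  have hz0 : Tendsto z atTop (nhds 0) := by
    apply squeeze_zero' (Filter.eventually_atTop.mpr ⟨1, fun n hn => (hzpos n hn).le⟩)
      (Filter.eventually_atTop.mpr ⟨1, fun n hn => hzle n hn⟩)
    simpa using hΔ.const_mul lam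
  have hE : Tendsto (fun n => Real.exp (z n ^ 2 / 4)) atTop (nhds 1) := by
    have h2 : Tendsto (fun n => z n ^ 2 / 4) atTop (nhds 0) := by
      simpa using ((hz0.pow 2).div_const 4)
    simpa [Function.comp_def] using (Real.continuous_exp.tendsto 0).comp h2
  have hI0 : Tendsto (fun n => besselI 0 (z n)) atTop (nhds 1) := by
    apply tendsto_of_tendsto_of_tendsto_of_le_of_le' tendsto_const_nhds hE
    · exact Filter.eventually_atTop.mpr ⟨1, fun n hn => one_le_besselI_zero (hzpos n hn).le⟩
    · exact Filter.eventually_atTop.mpr ⟨1, fun n hn => by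
        simpa using besselI_le 0 (hzpos n hn).le⟩
  -- Term 1
  have hT1 : Tendsto (fun n => besselI 0 (z n) * (1 + lam * (T / n) / 2)) atTop (nhds 1) := by
    have h2 : Tendsto (fun n : ℕ => 1 + lam * (T / n) / 2) atTop (nhds 1) := by
      have := ((hΔ.const_mul lam).div_const 2).const_add 1
      simpa using this
    simpa using hI0.mul h2
  -- Term 2
  have hT2 : Tendsto (fun n => (lam * s n / v + v * (T / n) / s n) * besselI 1 (z n))
      atTop (nhds 0) := by
    apply squeeze_zero'
      (g := fun n => (lam ^ 2 * (T / n) ^ 2 / 2 + lam * (T / n) / 2) * Real.exp (z n ^ 2 / 4))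
    · exact Filter.eventually_atTop.mpr ⟨1, fun n hn => by
        have h1 := (hs n hn).1
        have h3 : (0:ℝ) < T / n := by positivity
        have := besselI_nonneg 1 (hzpos n hn).le
        positivity⟩
    · refine Filter.eventually_atTop.mpr ⟨1, fun n hn => ?_⟩
      obtain ⟨h1, h2⟩ := hs n hn
      have h3 : (0:ℝ) < T / n := by
        have : (0:ℝ) < (n:ℝ) := by exact_mod_cast hn
        positivity
      have hC : (0:ℝ) ≤ lam * s n / v + v * (T / n) / s n := by positivity
      have hb : besselI 1 (z n) ≤ (z n / 2) * Real.exp (z n ^ 2 / 4) := by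
        simpa using besselI_le 1 (hzpos n hn).le
      have step1 : (lam * s n / v + v * (T / n) / s n) * besselI 1 (z n)
          ≤ ((lam * s n / v + v * (T / n) / s n) * (z n / 2)) * Real.exp (z n ^ 2 / 4) := by
        rw [mul_assoc]
        exact mul_le_mul_of_nonneg_left hb hC
      have heq : (lam * s n / v + v * (T / n) / s n) * (z n / 2)
          = lam ^ 2 * s n ^ 2 / (2 * v ^ 2) + lam * (T / n) / 2 := by
        show (lam * s n / v + v * (T / n) / s n) * ((lam / v) * s n / 2) = _
        field_simp
      have hs2 : s n ^ 2 ≤ v ^ 2 * (T / n) ^ 2 := by nlinarith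
      have hle : lam ^ 2 * s n ^ 2 / (2 * v ^ 2) + lam * (T / n) / 2
          ≤ lam ^ 2 * (T / n) ^ 2 / 2 + lam * (T / n) / 2 := by
        have : lam ^ 2 * s n ^ 2 / (2 * v ^ 2) ≤ lam ^ 2 * (T / n) ^ 2 / 2 := by
          rw [div_le_div_iff₀ (by positivity) (by positivity)]
          nlinarith
        linarith
      calc (lam * s n / v + v * (T / n) / s n) * besselI 1 (z n)
          ≤ ((lam * s n / v + v * (T / n) / s n) * (z n / 2)) * Real.exp (z n ^ 2 / 4) := step1
        _ ≤ (lam ^ 2 * (T / n) ^ 2 / 2 + lam * (T / n) / 2) * Real.exp (z n ^ 2 / 4) := by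
            rw [heq]
            exact mul_le_mul_of_nonneg_right hle (Real.exp_nonneg _)
    · have hB : Tendsto (fun n : ℕ => lam ^ 2 * (T / n) ^ 2 / 2 + lam * (T / n) / 2)
          atTop (nhds 0) := by
        have h1 := (((hΔ.pow 2).const_mul (lam ^ 2)).div_const 2).add
          ((hΔ.const_mul lam).div_const 2)
        simpa using h1
      simpa using hB.mul hE
  -- Term 3
  have hT3 : Tendsto (fun n => (lam * (T / n) / 2) * besselI 2 (z n)) atTop (nhds 0) := by
    apply squeeze_zero'
      (g := fun n => (lam * (T / n) / 2) * ((lam * (T / n) / 2) ^ 2 * Real.exp (z n ^ 2 / 4)))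
    · exact Filter.eventually_atTop.mpr ⟨1, fun n hn => by
        have h3 : (0:ℝ) < (n:ℝ) := by exact_mod_cast hn
        have := besselI_nonneg 2 (hzpos n hn).le
        positivity⟩
    · refine Filter.eventually_atTop.mpr ⟨1, fun n hn => ?_⟩
      have h3 : (0:ℝ) < (n:ℝ) := by exact_mod_cast hn
      have hb : besselI 2 (z n) ≤ (z n / 2) ^ 2 * Real.exp (z n ^ 2 / 4) :=
        besselI_le 2 (hzpos n hn).le
      have hzb : (z n / 2) ^ 2 ≤ (lam * (T / n) / 2) ^ 2 := by
        apply pow_le_pow_left₀ (div_nonneg (hzpos n hn).le (by norm_num))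
        linarith [hzle n hn]
      apply mul_le_mul_of_nonneg_left _ (by positivity : (0:ℝ) ≤ lam * (T / n) / 2)
      calc besselI 2 (z n) ≤ (z n / 2) ^ 2 * Real.exp (z n ^ 2 / 4) := hb
        _ ≤ (lam * (T / n) / 2) ^ 2 * Real.exp (z n ^ 2 / 4) :=
            mul_le_mul_of_nonneg_right hzb (Real.exp_nonneg _)
    · have hB : Tendsto (fun n : ℕ => lam * (T / n) / 2) atTop (nhds 0) := by
        simpa using (hΔ.const_mul lam).div_const 2
      simpa using hB.mul ((hB.pow 2).mul hE)
  have hNum : Tendsto (fun n =>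
      besselI 0 (z n) * (1 + lam * (T / n) / 2)
        + (lam * s n / v + v * (T / n) / s n) * besselI 1 (z n)
        + (lam * (T / n) / 2) * besselI 2 (z n)) atTop (nhds 1) := by
    simpa using (hT1.add hT2).add hT3
  -- Denominator
  have hD2 : Tendsto (fun n => (lam * v * (T / n) / s n) * besselI 1 (z n)) atTop (nhds 0) := by
    apply squeeze_zero' (g := fun n => (lam ^ 2 * (T / n) / 2) * Real.exp (z n ^ 2 / 4))
    · exact Filter.eventually_atTop.mpr ⟨1, fun n hn => by
        have h1 := (hs n hn).1
        have h3 : (0:ℝ) < (n:ℝ) := by exact_mod_cast hn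
        have := besselI_nonneg 1 (hzpos n hn).le
        positivity⟩
    · refine Filter.eventually_atTop.mpr ⟨1, fun n hn => ?_⟩
      obtain ⟨h1, h2⟩ := hs n hn
      have h3 : (0:ℝ) < (n:ℝ) := by exact_mod_cast hn
      have hb : besselI 1 (z n) ≤ (z n / 2) * Real.exp (z n ^ 2 / 4) := by
        simpa using besselI_le 1 (hzpos n hn).le
      have hC : (0:ℝ) ≤ lam * v * (T / n) / s n := by positivity
      have heq : (lam * v * (T / n) / s n) * (z n / 2) = lam ^ 2 * (T / n) / 2 := by
        show (lam * v * (T / n) / s n) * ((lam / v) * s n / 2) = _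
        field_simp
      calc (lam * v * (T / n) / s n) * besselI 1 (z n)
          ≤ (lam * v * (T / n) / s n) * ((z n / 2) * Real.exp (z n ^ 2 / 4)) :=
            mul_le_mul_of_nonneg_left hb hC
        _ = (lam ^ 2 * (T / n) / 2) * Real.exp (z n ^ 2 / 4) := by rw [← mul_assoc, heq]
    · have hB : Tendsto (fun n : ℕ => lam ^ 2 * (T / n) / 2) atTop (nhds 0) := by
        simpa using (hΔ.const_mul (lam ^ 2)).div_const 2
      simpa using hB.mul hE
  have hDen : Tendsto (fun n =>
      lam * besselI 0 (z n) + (lam * v * (T / n) / s n) * besselI 1 (z n))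
      atTop (nhds lam) := by
    have := (hI0.const_mul lam).add hD2
    simpa using this
  exact hNum.div hDen (ne_of_gt hlam)

/-- Deterministic core of Theorem 2: the approximated score converges to
`−T + N/λ` as `n → ∞` under the high frequency scheme `Δ_n = T/n`. -/
theorem score_tendsto (lam v T : ℝ) (hlam : 0 < lam) (hv : 0 < v) (hT : 0 < T)
    (N : ℕ) (u : ℕ → Fin N → ℝ)
    (hu : ∀ n : ℕ, 1 ≤ n → ∀ i : Fin N,
      0 < u n i ∧ u n i ≤ v ^ 2 * (T / n) ^ 2) :
    Tendsto
      (fun n : ℕ =>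
        -(n : ℝ) * (T / n) + ∑ i : Fin N,
          (besselI 0 ((lam / v) * Real.sqrt (u n i)) * (1 + lam * (T / n) / 2)
            + (lam * Real.sqrt (u n i) / v + v * (T / n) / Real.sqrt (u n i)) *
                besselI 1 ((lam / v) * Real.sqrt (u n i))
            + (lam * (T / n) / 2) * besselI 2 ((lam / v) * Real.sqrt (u n i))) /
          (lam * besselI 0 ((lam / v) * Real.sqrt (u n i))
            + (lam * v * (T / n) / Real.sqrt (u n i)) *
                besselI 1 ((lam / v) * Real.sqrt (u n i))))
      atTop (nhds (-T + (N : ℝ) / lam)) := by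
  have key : ∀ i : Fin N, Tendsto (fun n : ℕ =>
      (besselI 0 ((lam / v) * Real.sqrt (u n i)) * (1 + lam * (T / n) / 2)
        + (lam * Real.sqrt (u n i) / v + v * (T / n) / Real.sqrt (u n i)) *
            besselI 1 ((lam / v) * Real.sqrt (u n i))
        + (lam * (T / n) / 2) * besselI 2 ((lam / v) * Real.sqrt (u n i))) /
      (lam * besselI 0 ((lam / v) * Real.sqrt (u n i))
        + (lam * v * (T / n) / Real.sqrt (u n i)) *
            besselI 1 ((lam / v) * Real.sqrt (u n i)))) atTop (nhds (1 / lam)) := by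
    intro i
    apply ratio_tendsto lam v T hlam hv hT (fun n => Real.sqrt (u n i))
    intro n hn
    obtain ⟨h1, h2⟩ := hu n hn i
    have hn' : (0:ℝ) < (n:ℝ) := by exact_mod_cast hn
    refine ⟨Real.sqrt_pos.mpr h1, ?_⟩
    have heq : v ^ 2 * (T / n) ^ 2 = (v * (T / n)) ^ 2 := by ring
    rw [heq] at h2
    calc Real.sqrt (u n i) ≤ Real.sqrt ((v * (T / n)) ^ 2) := Real.sqrt_le_sqrt h2
      _ = v * (T / n) := Real.sqrt_sq
          (mul_nonneg hv.le (div_nonneg hT.le hn'.le))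
  have hsum : Tendsto (fun n : ℕ => ∑ i : Fin N,
      (besselI 0 ((lam / v) * Real.sqrt (u n i)) * (1 + lam * (T / n) / 2)
        + (lam * Real.sqrt (u n i) / v + v * (T / n) / Real.sqrt (u n i)) *
            besselI 1 ((lam / v) * Real.sqrt (u n i))
        + (lam * (T / n) / 2) * besselI 2 ((lam / v) * Real.sqrt (u n i))) /
      (lam * besselI 0 ((lam / v) * Real.sqrt (u n i))
        + (lam * v * (T / n) / Real.sqrt (u n i)) *
            besselI 1 ((lam / v) * Real.sqrt (u n i)))) atTop (nhds ((N : ℝ) / lam)) := by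
    have h := tendsto_finset_sum (Finset.univ : Finset (Fin N)) (fun i _ => key i)
    have hconst : (∑ _i : Fin N, (1 : ℝ) / lam) = (N : ℝ) / lam := by
      simp [Finset.sum_const, div_eq_mul_inv]
    rwa [hconst] at h
  have hmain := (tendsto_const_nhds (x := -T) (f := atTop (α := ℕ))).add hsum
  apply hmain.congr'
  refine Filter.eventually_atTop.mpr ⟨1, fun n hn => ?_⟩
  have hn' : (n:ℝ) ≠ 0 := by
    have : (0:ℝ) < (n:ℝ) := by exact_mod_cast hn
    exact this.ne'
  have h : -(n:ℝ) * (T / n) = -T := by field_simp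
  simp only [h]
end

section
/- (Single-term strict concavity.) Fix real numbers v > 0, Δ > 0 and u with 0 < u ≤ v²·Δ². Then the function h(λ) = log( λ·I_0((λ/v)·√u) + (λ·v·Δ/√u)·I_1((λ/v)·√u) ), defined for λ > 0, is twice differentiable on (0, ∞) and satisfies h''(λ) < 0 for every λ > 0. -/
namespace BesselAux

open Real Filter Set

/-- The `k`-th term of the Bessel series. -/
noncomputable def bterm (ν k : ℕ) (x : ℝ) : ℝ :=
  (x / 2) ^ (2 * k + ν) / ((Nat.factorial k : ℝ) * Nat.factorial (k + ν))

/-- The derivative of the `k`-th term. -/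
noncomputable def bterm' (ν k : ℕ) (x : ℝ) : ℝ :=
  (2 * k + ν) * (x / 2) ^ (2 * k + ν - 1) / (2 * ((Nat.factorial k : ℝ) * Nat.factorial (k + ν)))

lemma besselI_eq (ν : ℕ) (x : ℝ) : besselI ν x = ∑' k, bterm ν k x := rfl

lemma fact_pos (k : ℕ) : (0 : ℝ) < (Nat.factorial k : ℝ) := by
  exact_mod_cast Nat.factorial_pos k

lemma fact_ne (k : ℕ) : (Nat.factorial k : ℝ) ≠ 0 := (fact_pos k).ne'

lemma one_le_fact (k : ℕ) : (1 : ℝ) ≤ (Nat.factorial k : ℝ) := by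
  exact_mod_cast Nat.one_le_iff_ne_zero.mpr (Nat.factorial_pos k).ne'

lemma hasDerivAt_bterm (ν k : ℕ) (x : ℝ) : HasDerivAt (bterm ν k) (bterm' ν k x) x := by
  have h1 : HasDerivAt (fun y : ℝ => y / 2) (1 / 2) x := by
    simpa using (hasDerivAt_id x).div_const 2
  have h2 : HasDerivAt (fun y : ℝ => (y / 2) ^ (2 * k + ν))
      (((2 * k + ν : ℕ) : ℝ) * (x / 2) ^ (2 * k + ν - 1) * (1 / 2)) x :=
    (hasDerivAt_pow (2 * k + ν) (x / 2)).comp x h1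
  have h3 := h2.div_const ((Nat.factorial k : ℝ) * Nat.factorial (k + ν))
  refine h3.congr_deriv ?_
  unfold bterm'
  push_cast
  ring

lemma summable_aux (c : ℝ) (ν : ℕ) :
    Summable (fun k : ℕ => c ^ (2 * k + ν) / (Nat.factorial k : ℝ)) := by
  have : (fun k : ℕ => c ^ (2 * k + ν) / (Nat.factorial k : ℝ))
      = fun k => (c ^ ν) * ((c ^ 2) ^ k / (Nat.factorial k : ℝ)) := by
    funext k
    rw [pow_add, pow_mul]
    ring
  rw [this]
  exact (Real.summable_pow_div_factorial (c ^ 2)).mul_left _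

lemma bterm_bound (ν k : ℕ) {c y : ℝ} (hy : |y| ≤ c) :
    |bterm ν k y| ≤ c ^ (2 * k + ν) / (Nat.factorial k : ℝ) := by
  have hc0 : 0 ≤ c := le_trans (abs_nonneg y) hy
  have hy2 : |y / 2| ≤ c := by
    rw [abs_div, abs_of_pos (show (0:ℝ) < 2 by norm_num)]
    calc |y| / 2 ≤ c / 2 := by linarith
      _ ≤ c := by linarith
  unfold bterm
  rw [abs_div, abs_pow]
  have hden : |(Nat.factorial k : ℝ) * Nat.factorial (k + ν)|
      = (Nat.factorial k : ℝ) * Nat.factorial (k + ν) := abs_of_pos (by positivity)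
  rw [hden]
  apply div_le_div₀ (by positivity)
  · exact pow_le_pow_left₀ (abs_nonneg _) hy2 _
  · exact fact_pos k
  · exact le_mul_of_one_le_right (fact_pos k).le (one_le_fact _)

lemma summable_bterm (ν : ℕ) (y : ℝ) : Summable (fun k => bterm ν k y) := by
  apply Summable.of_norm_bounded (summable_aux (|y|) ν)
  intro k
  exact bterm_bound ν k le_rfl

lemma bterm'_bound (ν k : ℕ) {c y : ℝ} (hc1 : 1 ≤ c) (hy : |y| ≤ c) :
    |bterm' ν k y| ≤ (2 * c) ^ (2 * k + ν) / (Nat.factorial k : ℝ) := by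
  have hc0 : (0 : ℝ) < c := lt_of_lt_of_le one_pos hc1
  have hy2 : |y / 2| ≤ c := by
    rw [abs_div, abs_of_pos (show (0:ℝ) < 2 by norm_num)]
    calc |y| / 2 ≤ c / 2 := by linarith
      _ ≤ c := by linarith
  unfold bterm'
  rw [abs_div]
  have hden : |(2 : ℝ) * ((Nat.factorial k : ℝ) * Nat.factorial (k + ν))|
      = 2 * ((Nat.factorial k : ℝ) * Nat.factorial (k + ν)) := abs_of_pos (by positivity)
  rw [hden]
  apply div_le_div₀ (by positivity)
  · have h1 : |(2 * (k : ℝ) + (ν : ℝ))| ≤ (2 : ℝ) ^ (2 * k + ν) := by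
      rw [abs_of_nonneg (by positivity)]
      have := (Nat.lt_two_pow_self (n := 2 * k + ν)).le
      calc (2 * (k : ℝ) + (ν : ℝ)) = ((2 * k + ν : ℕ) : ℝ) := by push_cast; ring
        _ ≤ ((2 ^ (2 * k + ν) : ℕ) : ℝ) := by exact_mod_cast this
        _ = (2 : ℝ) ^ (2 * k + ν) := by push_cast; ring
    have h2 : |y / 2| ^ (2 * k + ν - 1) ≤ c ^ (2 * k + ν) :=
      le_trans (pow_le_pow_left₀ (abs_nonneg _) hy2 _)
        (pow_le_pow_right₀ hc1 (Nat.sub_le _ _))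
    rw [abs_mul]
    calc |2 * (k : ℝ) + (ν : ℝ)| * |(y / 2) ^ (2 * k + ν - 1)|
        = |2 * (k : ℝ) + (ν : ℝ)| * |y / 2| ^ (2 * k + ν - 1) := by rw [abs_pow]
      _ ≤ (2 : ℝ) ^ (2 * k + ν) * c ^ (2 * k + ν) :=
          mul_le_mul h1 h2 (by positivity) (by positivity)
      _ = (2 * c) ^ (2 * k + ν) := by rw [mul_pow]
    done
  · exact fact_pos k
  · nlinarith [fact_pos k, one_le_fact (k + ν), fact_pos (k + ν)]

lemma summable_bterm' (ν : ℕ) (y : ℝ) : Summable (fun k => bterm' ν k y) := by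
  apply Summable.of_norm_bounded (summable_aux (2 * (|y| + 1)) ν)
  intro k
  exact bterm'_bound ν k (c := |y| + 1) (by linarith [abs_nonneg y]) (by linarith [abs_nonneg y])

/-- Term-by-term differentiation of the Bessel series. -/
lemma hasDerivAt_besselI (ν : ℕ) (x : ℝ) :
    HasDerivAt (besselI ν) (∑' k, bterm' ν k x) x := by
  set R : ℝ := |x| + 1 with hR
  have hR1 : (1 : ℝ) ≤ R := by rw [hR]; linarith [abs_nonneg x]
  have hball : x ∈ Metric.ball (0 : ℝ) R := by
    simp [Real.norm_eq_abs, hR]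
  apply hasDerivAt_of_tendstoUniformlyOn (Metric.isOpen_ball)
    (tendstoUniformlyOn_tsum (summable_aux (2 * R) ν) ?hbd)
    ?hderiv ?hlim hball
  case hbd =>
    intro k y hy
    rw [Real.norm_eq_abs]
    apply bterm'_bound ν k hR1
    rw [Metric.mem_ball, dist_zero_right, Real.norm_eq_abs] at hy
    exact hy.le
  case hderiv =>
    filter_upwards with t y _
    exact HasDerivAt.sum fun k _ => hasDerivAt_bterm ν k y
  case hlim =>
    intro y _
    simp only [Finset.sum_apply]
    exact (summable_bterm ν y).hasSum

lemma differentiable_besselI (ν : ℕ) : Differentiable ℝ (besselI ν) :=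
  fun x => (hasDerivAt_besselI ν x).differentiableAt

lemma continuous_besselI (ν : ℕ) : Continuous (besselI ν) :=
  (differentiable_besselI ν).continuous

/-- `I₀' = I₁`. -/
lemma hasDerivAt_besselI0 (x : ℝ) : HasDerivAt (besselI 0) (besselI 1 x) x := by
  have h := hasDerivAt_besselI 0 x
  have : (∑' k, bterm' 0 k x) = besselI 1 x := by
    rw [Summable.tsum_eq_zero_add (summable_bterm' 0 x)]
    have h0 : bterm' 0 0 x = 0 := by
      unfold bterm'
      norm_num
    rw [h0, zero_add, besselI_eq]
    apply tsum_congr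
    intro k
    unfold bterm' bterm
    have he : 2 * (k + 1) + 0 - 1 = 2 * k + 1 := by omega
    rw [he]
    have hf : (Nat.factorial (k + 1) : ℝ) = (k + 1) * Nat.factorial k := by
      exact_mod_cast Nat.factorial_succ k
    rw [hf]
    push_cast
    field_simp
    ring
  rwa [this] at h

/-- `I₁'(x) = I₀(x) - I₁(x)/x` for `x ≠ 0`. -/
lemma hasDerivAt_besselI1 {x : ℝ} (hx : x ≠ 0) :
    HasDerivAt (besselI 1) (besselI 0 x - besselI 1 x / x) x := by
  have h := hasDerivAt_besselI 1 x
  have : (∑' k, bterm' 1 k x) = besselI 0 x - besselI 1 x / x := by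
    rw [besselI_eq, besselI_eq, ← tsum_div_const,
      ← Summable.tsum_sub (summable_bterm 0 x) ((summable_bterm 1 x).div_const x)]
    apply tsum_congr
    intro k
    unfold bterm' bterm
    have he : 2 * k + 1 - 1 = 2 * k := by omega
    rw [he]
    have hf : (Nat.factorial (k + 1) : ℝ) = (k + 1) * Nat.factorial k := by
      exact_mod_cast Nat.factorial_succ k
    have hpow : (x / 2) ^ (2 * k + 1) = (x / 2) ^ (2 * k) * (x / 2) := pow_succ _ _
    rw [hf, hpow]
    push_cast
    field_simp
    ring
  rwa [this] at h

lemma bterm_nonneg (ν k : ℕ) {x : ℝ} (hx : 0 ≤ x) : 0 ≤ bterm ν k x := by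
  unfold bterm
  positivity

lemma besselI0_ge_one {x : ℝ} (hx : 0 ≤ x) : 1 ≤ besselI 0 x := by
  have h0 : bterm 0 0 x = 1 := by
    unfold bterm
    norm_num
  calc (1 : ℝ) = bterm 0 0 x := h0.symm
    _ ≤ ∑' k, bterm 0 k x :=
        Summable.le_tsum (summable_bterm 0 x) 0 fun j _ => bterm_nonneg 0 j hx
    _ = besselI 0 x := (besselI_eq 0 x).symm

lemma besselI0_pos {x : ℝ} (hx : 0 ≤ x) : 0 < besselI 0 x :=
  lt_of_lt_of_le one_pos (besselI0_ge_one hx)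

lemma besselI1_pos {x : ℝ} (hx : 0 < x) : 0 < besselI 1 x := by
  have h0 : bterm 1 0 x = x / 2 := by
    unfold bterm
    norm_num
  calc (0 : ℝ) < x / 2 := by linarith
    _ = bterm 1 0 x := h0.symm
    _ ≤ ∑' k, bterm 1 k x :=
        Summable.le_tsum (summable_bterm 1 x) 0 fun j _ => bterm_nonneg 1 j hx.le
    _ = besselI 1 x := (besselI_eq 1 x).symm

lemma besselI0_zero : besselI 0 0 = 1 := by
  rw [besselI_eq]
  rw [tsum_eq_single 0]
  · unfold bterm; norm_num
  · intro k hk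
    unfold bterm
    have : 2 * k + 0 ≠ 0 := by omega
    rw [zero_div, zero_pow this, zero_div]

lemma besselI1_zero : besselI 1 0 = 0 := by
  rw [besselI_eq]
  convert tsum_zero with k
  unfold bterm
  have : 2 * k + 1 ≠ 0 := by omega
  rw [zero_div, zero_pow this, zero_div]

/-- `I₁ < I₀` on `(0, ∞)`. -/
lemma besselI1_lt_besselI0 {z : ℝ} (hz : 0 < z) : besselI 1 z < besselI 0 z := by
  set χ : ℝ → ℝ := fun y => Real.exp y * (besselI 0 y - besselI 1 y) with hχ
  have hmono : StrictMonoOn χ (Set.Ici (0 : ℝ)) := by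
    apply strictMonoOn_of_deriv_pos (convex_Ici 0)
    · exact (Real.continuous_exp.mul
        ((continuous_besselI 0).sub (continuous_besselI 1))).continuousOn
    · intro y hy
      rw [interior_Ici] at hy
      have hy0 : 0 < y := hy
      have hd : HasDerivAt χ (Real.exp y * (besselI 1 y / y)) y := by
        have h := (Real.hasDerivAt_exp y).mul
          ((hasDerivAt_besselI0 y).sub (hasDerivAt_besselI1 hy0.ne'))
        refine h.congr_deriv ?_
        simp only [Pi.sub_apply, Pi.pow_apply, id_eq]
        field_simp
        ring
      rw [hd.deriv]
      have := besselI1_pos hy0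
      positivity
  have h01 : χ 0 < χ z := hmono (le_refl (0:ℝ) : (0:ℝ) ∈ Set.Ici (0:ℝ)) hz.le hz
  have hχ0 : χ 0 = 1 := by
    simp [hχ, besselI0_zero, besselI1_zero]
  rw [hχ0] at h01
  have hexp : 0 < Real.exp z := Real.exp_pos z
  by_contra hcon
  push_neg at hcon
  have : Real.exp z * (besselI 0 z - besselI 1 z) ≤ 0 :=
    mul_nonpos_of_nonneg_of_nonpos hexp.le (by linarith)
  simp only [hχ] at h01
  linarith

/-- The key inequality `z (I₀² - I₁²) - I₀ I₁ > 0` on `(0, ∞)`. -/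
lemma phi_pos {z : ℝ} (hz : 0 < z) :
    0 < z * ((besselI 0 z) ^ 2 - (besselI 1 z) ^ 2) - besselI 0 z * besselI 1 z := by
  set φ : ℝ → ℝ := fun y =>
    y * ((besselI 0 y) ^ 2 - (besselI 1 y) ^ 2) - besselI 0 y * besselI 1 y with hφdef
  have hmono : StrictMonoOn φ (Set.Ici (0 : ℝ)) := by
    apply strictMonoOn_of_deriv_pos (convex_Ici 0)
    · apply ContinuousOn.sub
      · exact (continuous_id.mul
          (((continuous_besselI 0).pow 2).sub ((continuous_besselI 1).pow 2))).continuousOn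
      · exact ((continuous_besselI 0).mul (continuous_besselI 1)).continuousOn
    · intro y hy
      rw [interior_Ici] at hy
      have hy0 : 0 < y := hy
      have h0 := hasDerivAt_besselI0 y
      have h1 := hasDerivAt_besselI1 hy0.ne'
      have hd : HasDerivAt φ (besselI 0 y * besselI 1 y / y) y := by
        have h := ((hasDerivAt_id y).mul ((h0.pow 2).sub (h1.pow 2))).sub (h0.mul h1)
        refine h.congr_deriv ?_
        simp only [Pi.sub_apply, Pi.pow_apply, id_eq]
        field_simp
        ring
      rw [hd.deriv]
      have ha := besselI0_pos hy0.le
      have hb := besselI1_pos hy0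
      positivity
  have h01 : φ 0 < φ z := hmono (le_refl (0:ℝ) : (0:ℝ) ∈ Set.Ici (0:ℝ)) hz.le hz
  have hφ0 : φ 0 = 0 := by
    simp [hφdef, besselI1_zero]
  rw [hφ0] at h01
  exact h01

end BesselAux

open BesselAux Real Filter Set

/-- Single-term strict concavity: one summand of the approximated
log-likelihood is twice differentiable on `(0, ∞)` with negative second
derivative. -/
theorem logLik_summand_strictly_concave (v Δ u : ℝ)
    (hv : 0 < v) (hΔ : 0 < Δ) (hu : 0 < u) (hu' : u ≤ v ^ 2 * Δ ^ 2) :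
    (∀ lam : ℝ, 0 < lam →
      DifferentiableAt ℝ
        (fun l : ℝ => Real.log
          (l * besselI 0 ((l / v) * Real.sqrt u)
            + (l * v * Δ / Real.sqrt u) * besselI 1 ((l / v) * Real.sqrt u))) lam ∧
      DifferentiableAt ℝ
        (deriv (fun l : ℝ => Real.log
          (l * besselI 0 ((l / v) * Real.sqrt u)
            + (l * v * Δ / Real.sqrt u) * besselI 1 ((l / v) * Real.sqrt u)))) lam) ∧
    (∀ lam : ℝ, 0 < lam →
      deriv (deriv (fun l : ℝ => Real.log
        (l * besselI 0 ((l / v) * Real.sqrt u)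
          + (l * v * Δ / Real.sqrt u) * besselI 1 ((l / v) * Real.sqrt u)))) lam
        < 0) := by
  have hsu : 0 < Real.sqrt u := Real.sqrt_pos.mpr hu
  set s0 : ℝ := Real.sqrt u / v with hs0def
  have hs0 : 0 < s0 := div_pos hsu hv
  set β : ℝ := v * Δ / Real.sqrt u with hβdef
  have hβ1 : 1 ≤ β := by
    rw [hβdef, le_div_iff₀ hsu, one_mul]
    have h1 : Real.sqrt u ≤ Real.sqrt (v ^ 2 * Δ ^ 2) := Real.sqrt_le_sqrt hu'
    have h2 : Real.sqrt (v ^ 2 * Δ ^ 2) = v * Δ := by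
      rw [show v ^ 2 * Δ ^ 2 = (v * Δ) ^ 2 by ring, Real.sqrt_sq (by positivity)]
    linarith
  have hβ0 : 0 < β := lt_of_lt_of_le one_pos hβ1
  set F : ℝ → ℝ := fun l => l * besselI 0 (l * s0) + β * l * besselI 1 (l * s0) with hF
  set G : ℝ → ℝ := fun l => besselI 0 (l * s0) + (l * s0) * besselI 1 (l * s0)
      + β * ((l * s0) * besselI 0 (l * s0)) with hG
  set H : ℝ → ℝ := fun l => s0 * ((l * s0) * besselI 0 (l * s0) + besselI 1 (l * s0)
      + β * (besselI 0 (l * s0) + (l * s0) * besselI 1 (l * s0))) with hH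
  have hfun : (fun l : ℝ => Real.log (l * besselI 0 ((l / v) * Real.sqrt u)
      + (l * v * Δ / Real.sqrt u) * besselI 1 ((l / v) * Real.sqrt u)))
      = fun l => Real.log (F l) := by
    funext l
    have harg : (l / v) * Real.sqrt u = l * s0 := by rw [hs0def]; ring
    have hco : l * v * Δ / Real.sqrt u = β * l := by rw [hβdef]; ring
    rw [harg, hco, hF]
  have hFpos : ∀ l : ℝ, 0 < l → 0 < F l := by
    intro l hl
    have hz : 0 < l * s0 := mul_pos hl hs0
    have h0 := besselI0_pos hz.le
    have h1 := besselI1_pos hz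
    simp only [hF]
    have e1 : 0 < l * besselI 0 (l * s0) := mul_pos hl h0
    have e2 : 0 < β * l * besselI 1 (l * s0) := mul_pos (mul_pos hβ0 hl) h1
    linarith
  have DF : ∀ l : ℝ, 0 < l → HasDerivAt F (G l) l := by
    intro l hl
    have hz : 0 < l * s0 := mul_pos hl hs0
    have harg : HasDerivAt (fun y : ℝ => y * s0) s0 l := by
      simpa using (hasDerivAt_id l).mul_const s0
    have h0 : HasDerivAt (fun y : ℝ => besselI 0 (y * s0)) (besselI 1 (l * s0) * s0) l :=
      HasDerivAt.comp (h := fun y : ℝ => y * s0) l (hasDerivAt_besselI0 (l * s0)) harg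
    have h1 : HasDerivAt (fun y : ℝ => besselI 1 (y * s0))
        ((besselI 0 (l * s0) - besselI 1 (l * s0) / (l * s0)) * s0) l :=
      HasDerivAt.comp (h := fun y : ℝ => y * s0) l (hasDerivAt_besselI1 hz.ne') harg
    have hd := ((hasDerivAt_id l).mul h0).add (((hasDerivAt_id l).const_mul β).mul h1)
    refine hd.congr_deriv ?_
    simp only [hG, id_eq]
    field_simp
    ring
  have DG : ∀ l : ℝ, 0 < l → HasDerivAt G (H l) l := by
    intro l hl
    have hz : 0 < l * s0 := mul_pos hl hs0
    have harg : HasDerivAt (fun y : ℝ => y * s0) s0 l := by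
      simpa using (hasDerivAt_id l).mul_const s0
    have h0 : HasDerivAt (fun y : ℝ => besselI 0 (y * s0)) (besselI 1 (l * s0) * s0) l :=
      HasDerivAt.comp (h := fun y : ℝ => y * s0) l (hasDerivAt_besselI0 (l * s0)) harg
    have h1 : HasDerivAt (fun y : ℝ => besselI 1 (y * s0))
        ((besselI 0 (l * s0) - besselI 1 (l * s0) / (l * s0)) * s0) l :=
      HasDerivAt.comp (h := fun y : ℝ => y * s0) l (hasDerivAt_besselI1 hz.ne') harg
    have hd := (h0.add (harg.mul h1)).add ((harg.mul h0).const_mul β)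
    refine hd.congr_deriv ?_
    simp only [hH]
    field_simp
    ring
  have heq : ∀ lam : ℝ, 0 < lam →
      deriv (fun l => Real.log (F l)) =ᶠ[nhds lam] fun l => G l / F l := by
    intro lam hlam
    have hmem : Set.Ioi (0:ℝ) ∈ nhds lam := isOpen_Ioi.mem_nhds hlam
    filter_upwards [hmem] with l hl
    exact ((DF l hl).log (hFpos l hl).ne').deriv
  constructor
  · intro lam hlam
    have hFp := hFpos lam hlam
    constructor
    · rw [hfun]
      exact (((DF lam hlam).log hFp.ne')).differentiableAt
    · rw [hfun, (heq lam hlam).differentiableAt_iff]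
      exact ((DG lam hlam).div (DF lam hlam) hFp.ne').differentiableAt
  · intro lam hlam
    have hFp := hFpos lam hlam
    have h2 : HasDerivAt (fun l => G l / F l)
        ((H lam * F lam - G lam * G lam) / (F lam) ^ 2) lam :=
      (DG lam hlam).div (DF lam hlam) hFp.ne'
    rw [hfun, (heq lam hlam).deriv_eq, h2.deriv]
    apply div_neg_of_neg_of_pos _ (by positivity)
    have hz : 0 < lam * s0 := mul_pos hlam hs0
    have ha := besselI0_pos hz.le
    have hb := besselI1_pos hz
    have hba := besselI1_lt_besselI0 hz
    have hphi := phi_pos hz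
    have key : H lam * F lam - G lam * G lam =
        -((β ^ 2 - 1) * (lam * s0) * ((lam * s0) *
            ((besselI 0 (lam * s0)) ^ 2 - (besselI 1 (lam * s0)) ^ 2)
          - besselI 0 (lam * s0) * besselI 1 (lam * s0)))
        - ((besselI 0 (lam * s0)) ^ 2 + β * (lam * s0) *
            ((besselI 0 (lam * s0)) ^ 2 - (besselI 1 (lam * s0)) ^ 2)) := by
      simp only [hH, hF, hG]
      ring
    rw [key]
    have hsq : 0 ≤ β ^ 2 - 1 := by nlinarith
    have h1 : 0 ≤ (β ^ 2 - 1) * (lam * s0) * ((lam * s0) *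
        ((besselI 0 (lam * s0)) ^ 2 - (besselI 1 (lam * s0)) ^ 2)
        - besselI 0 (lam * s0) * besselI 1 (lam * s0)) :=
      mul_nonneg (mul_nonneg hsq hz.le) hphi.le
    have hab2 : 0 < (besselI 0 (lam * s0)) ^ 2 - (besselI 1 (lam * s0)) ^ 2 := by nlinarith
    have h2' : 0 < (besselI 0 (lam * s0)) ^ 2 + β * (lam * s0) *
        ((besselI 0 (lam * s0)) ^ 2 - (besselI 1 (lam * s0)) ^ 2) := by
      have : 0 < β * (lam * s0) := mul_pos hβ0 hz
      nlinarith
    linarith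
end
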